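/- Let A and B be associative rings with identity, f : A → B a ring homomorphism, and J a proper two-sided ideal of B. Assume f⁻¹(J) ∩ nil(A) = {0}, i.e., the only nilpotent element of A mapped into J by f is 0. If the subring f(A)+J of B is an Armendariz ring, then the amalgamation A⋈fJ is an Armendariz ring. -/

import Mathlib

open Polynomial

/-- A ring `R` is Armendariz if whenever `p * q = 0` for polynomials over `R`,
every product of a coefficient of `p` with a coefficient of `q` is zero. -/
def IsArmendariz (R : Type*) [Ring R] : Prop :=
  ∀ p q : R[X], p * q = 0 → ∀ i j : ℕ, p.coeff i * q.coeff j = 0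

/-- A ring `R` is nil-Armendariz if whenever every coefficient of `p * q` is nilpotent,
every product of a coefficient of `p` with a coefficient of `q` is nilpotent. -/
def IsNilArmendariz (R : Type*) [Ring R] : Prop :=
  ∀ p q : R[X], (∀ k : ℕ, IsNilpotent ((p * q).coeff k)) →
    ∀ i j : ℕ, IsNilpotent (p.coeff i * q.coeff j)

/-- A ring `R` is weak Armendariz if whenever `p * q = 0` for polynomials over `R`,
every product of a coefficient of `p` with a coefficient of `q` is nilpotent. -/
def IsWeakArmendariz (R : Type*) [Ring R] : Prop :=
  ∀ p q : R[X], p * q = 0 → ∀ i j : ℕ, IsNilpotent (p.coeff i * q.coeff j)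

/-- The amalgamation `A ⋈^f J = {(a, f a + j) | a ∈ A, j ∈ J}` of `A` and `B` along the
two-sided ideal `J` with respect to `f`, as a subring of `A × B`.  (A pair `(a, b)` has the
form `(a, f a + j)` with `j ∈ J` iff `b - f a ∈ J`.) -/
def amalgamation {A B : Type*} [Ring A] [Ring B] (f : A →+* B) (J : TwoSidedIdeal B) :
    Subring (A × B) where
  carrier := {p | p.2 - f p.1 ∈ J}
  zero_mem' := by simp [J.zero_mem]
  one_mem' := by simp [J.zero_mem]
  add_mem' := by
    intro x y hx hy
    have e : (x + y).2 - f ((x + y).1) = (x.2 - f x.1) + (y.2 - f y.1) := by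
      simp only [Prod.snd_add, Prod.fst_add, map_add]; abel
    show (x + y).2 - f ((x + y).1) ∈ J
    rw [e]; exact J.add_mem hx hy
  neg_mem' := by
    intro x hx
    have e : (-x).2 - f ((-x).1) = -(x.2 - f x.1) := by
      simp only [Prod.snd_neg, Prod.fst_neg, map_neg]; abel
    show (-x).2 - f ((-x).1) ∈ J
    rw [e]; exact J.neg_mem hx
  mul_mem' := by
    intro x y hx hy
    have e : (x * y).2 - f ((x * y).1) = x.2 * (y.2 - f y.1) + (x.2 - f x.1) * f y.1 := by
      simp only [Prod.snd_mul, Prod.fst_mul, map_mul, mul_sub, sub_mul]; abel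
    show (x * y).2 - f ((x * y).1) ∈ J
    rw [e]; exact J.add_mem (J.mul_mem_left _ _ hy) (J.mul_mem_right _ _ hx)

/-- The subring `f(A) + J = {f a + j | a ∈ A, j ∈ J}` of `B`.  (An element `b` has the form
`f a + j` with `j ∈ J` iff `b - f a ∈ J` for some `a`.) -/
def imageAddIdeal {A B : Type*} [Ring A] [Ring B] (f : A →+* B) (J : TwoSidedIdeal B) :
    Subring B where
  carrier := {b | ∃ a : A, b - f a ∈ J}
  zero_mem' := ⟨0, by simp [J.zero_mem]⟩
  one_mem' := ⟨1, by simp [J.zero_mem]⟩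
  add_mem' := by
    rintro x y ⟨a, ha⟩ ⟨b, hb⟩
    refine ⟨a + b, ?_⟩
    have e : x + y - f (a + b) = (x - f a) + (y - f b) := by
      rw [map_add]; abel
    rw [e]; exact J.add_mem ha hb
  neg_mem' := by
    rintro x ⟨a, ha⟩
    refine ⟨-a, ?_⟩
    have e : -x - f (-a) = -(x - f a) := by rw [map_neg]; abel
    rw [e]; exact J.neg_mem ha
  mul_mem' := by
    rintro x y ⟨a, ha⟩ ⟨b, hb⟩
    refine ⟨a * b, ?_⟩
    have e : x * y - f (a * b) = x * (y - f b) + (x - f a) * f b := by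
      rw [map_mul, mul_sub, sub_mul]; abel
    rw [e]; exact J.add_mem (J.mul_mem_left _ _ hb) (J.mul_mem_right _ _ ha)


private lemma key_lemma {R : Type*} [Ring R] (S : Set R)
    (hSl : ∀ s ∈ S, ∀ r : R, r * s ∈ S)
    (hSr : ∀ s ∈ S, ∀ r : R, s * r ∈ S)
    (hred : ∀ z ∈ S, z * z = 0 → z = 0)
    (p q : R[X]) (hpq : p * q = 0)
    (hmem : ∀ i j : ℕ, p.coeff i * q.coeff j ∈ S) :
    ∀ i j : ℕ, p.coeff i * q.coeff j = 0 := by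
  have flip : ∀ z ∈ S, ∀ y : R, z * y = 0 → y * z = 0 := by
    intro z hz y h0
    refine hred _ (hSl z hz y) ?_
    have e : y * z * (y * z) = y * (z * y * z) := by simp only [mul_assoc]
    rw [e, h0, zero_mul, mul_zero]
  suffices H : ∀ k i j : ℕ, i + j = k → p.coeff i * q.coeff j = 0 by
    intro i j; exact H (i + j) i j rfl
  intro k
  induction k using Nat.strong_induction_on with
  | _ k IH =>
    have stepA : ∀ i j i' j' : ℕ, i + j = k → i' + j' = k → j < j' →
        (p.coeff i * q.coeff j) * (p.coeff i' * q.coeff j') = 0 := by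
      intro i j i' j' hij hij' hjj'
      have hz : p.coeff i' * q.coeff j = 0 := IH (i' + j) (by omega) i' j rfl
      set a := p.coeff i with ha
      set b := q.coeff j with hb
      set a' := p.coeff i' with ha'
      set b' := q.coeff j' with hb'
      have hZmem : a' * b' * (a * b) * a' ∈ S :=
        hSr _ (hSl _ (hmem i j) (a' * b')) a'
      have hZb : a' * b' * (a * b) * a' * b = 0 := by
        have e : a' * b' * (a * b) * a' * b = a' * b' * (a * b) * (a' * b) := by
          simp only [mul_assoc]
        rw [e, hz, mul_zero]
      have hbZ : b * (a' * b' * (a * b) * a') = 0 := flip _ hZmem b hZb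
      refine hred _ (hSr _ (hmem i j) (a' * b')) ?_
      have e : a * b * (a' * b') * (a * b * (a' * b'))
          = a * (b * (a' * b' * (a * b) * a')) * b' := by simp only [mul_assoc]
      rw [e, hbZ, mul_zero, zero_mul]
    intro i
    induction i using Nat.strong_induction_on with
    | _ i IH2 =>
      intro j hij
      have h1 : ∑ x ∈ Finset.HasAntidiagonal.antidiagonal k, p.coeff x.1 * q.coeff x.2 = 0 := by
        rw [← Polynomial.coeff_mul, hpq, Polynomial.coeff_zero]
      have h2 : ∑ x ∈ Finset.HasAntidiagonal.antidiagonal k,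
          (p.coeff x.1 * q.coeff x.2) * (p.coeff i * q.coeff j)
          = (p.coeff i * q.coeff j) * (p.coeff i * q.coeff j) := by
        refine Finset.sum_eq_single (i, j) ?_ ?_
        · rintro ⟨u, v⟩ hmemad hne
          have huv : u + v = k := Finset.HasAntidiagonal.mem_antidiagonal.mp hmemad
          rcases lt_trichotomy v j with hv | hv | hv
          · exact stepA u v i j huv hij hv
          · exact absurd (by simp [show u = i by omega, hv]) hne
          · rw [IH2 u (by omega) v huv, zero_mul]
        · intro hni
          exact absurd (Finset.HasAntidiagonal.mem_antidiagonal.mpr hij) hni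
      refine hred _ (hmem i j) ?_
      rw [← h2, ← Finset.sum_mul, h1, zero_mul]

/-- The canonical projection of the amalgamation onto `f(A) + J`. -/
private def amalgToImage {A B : Type*} [Ring A] [Ring B] (f : A →+* B)
    (J : TwoSidedIdeal B) : amalgamation f J →+* imageAddIdeal f J where
  toFun x := ⟨x.1.2, ⟨x.1.1, x.2⟩⟩
  map_one' := rfl
  map_mul' _ _ := rfl
  map_zero' := rfl
  map_add' _ _ := rfl

theorem stmt_4 {A B : Type*} [Ring A] [Ring B] (f : A →+* B) (J : TwoSidedIdeal B)
    (hJ : (1 : B) ∉ J)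
    (h : ∀ a : A, f a ∈ J → IsNilpotent a → a = 0)
    (hB : IsArmendariz (imageAddIdeal f J)) :
    IsArmendariz (amalgamation f J) := by
  classical
  intro P Q hPQ
  set φ : amalgamation f J →+* imageAddIdeal f J := amalgToImage f J with hφ
  set ψ : amalgamation f J →+* A := (RingHom.fst A B).comp (amalgamation f J).subtype with hψ
  have hbd : ∀ i j : ℕ, ((P.coeff i : A × B)).2 * ((Q.coeff j : A × B)).2 = 0 := by
    intro i j
    have h0 := hB (P.map φ) (Q.map φ)
      (by rw [← Polynomial.map_mul, hPQ, Polynomial.map_zero]) i j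
    rw [Polynomial.coeff_map, Polynomial.coeff_map] at h0
    exact congrArg Subtype.val h0
  have hA : ∀ i j : ℕ, ((P.coeff i : A × B)).1 * ((Q.coeff j : A × B)).1 = 0 := by
    have hk := key_lemma {a : A | f a ∈ J}
      (fun s hs r => by show f (r * s) ∈ J; rw [map_mul]; exact J.mul_mem_left _ _ hs)
      (fun s hs r => by show f (s * r) ∈ J; rw [map_mul]; exact J.mul_mem_right _ _ hs)
      (fun z hz h0 => h z hz ⟨2, by rwa [pow_two]⟩)
      (P.map ψ) (Q.map ψ)
      (by rw [← Polynomial.map_mul, hPQ, Polynomial.map_zero])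
      (by
        intro i j
        rw [Polynomial.coeff_map, Polynomial.coeff_map]
        show f (ψ (P.coeff i) * ψ (Q.coeff j)) ∈ J
        rw [map_mul]
        set x := P.coeff i with hx
        set y := Q.coeff j with hy
        have e : f (ψ x) * f (ψ y)
            = (x : A × B).2 * (y : A × B).2
              - (x : A × B).2 * ((y : A × B).2 - f (y : A × B).1)
              - ((x : A × B).2 - f (x : A × B).1) * f (y : A × B).1 := by
          show f (x : A × B).1 * f (y : A × B).1 = _
          noncomm_ring
        rw [e, hbd i j]
        refine sub_mem (sub_mem J.zero_mem ?_) ?_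
        · exact J.mul_mem_left _ _ y.2
        · exact J.mul_mem_right _ _ x.2)
    intro i j
    have := hk i j
    rw [Polynomial.coeff_map, Polynomial.coeff_map] at this
    exact this
  intro i j
  refine Subtype.ext (Prod.ext ?_ ?_)
  · exact hA i j
  · exact hbd i j
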